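/- Let T be a tournament, L = (x_1,...,x_n) a median order of T with |N⁺(x_n)| = |N⁺⁺(x_n)|, and suppose N⁻(x_n) \ N⁺⁺(x_n) is nonempty with x_i its earliest element in L. Then (x_i, x_1, ..., x_{i-1}, x_{i+1}, ..., x_n) is also a median order of T. -/

import Mathlib

variable {V : Type*}

/-- An oriented graph: no loops or 2-cycles (asymmetric relation). -/
def Oriented (E : V → V → Prop) : Prop := ∀ u v : V, E u v → ¬ E v u

/-- A tournament: oriented and any two distinct vertices are joined by an arc. -/
def Tournament (E : V → V → Prop) : Prop :=
  Oriented E ∧ ∀ u v : V, u ≠ v → E u v ∨ E v u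

def outN (E : V → V → Prop) (v : V) : Set V := {u | E v u}

def inN (E : V → V → Prop) (v : V) : Set V := {u | E u v}

/-- The second out-neighborhood: vertices at directed distance exactly 2. -/
def secondN (E : V → V → Prop) (v : V) : Set V :=
  {u | ¬ E v u ∧ u ≠ v ∧ ∃ w, E v w ∧ E w u}

/-- `u` and `v` are distinct non-adjacent vertices (a missing edge). -/
def NonAdj (E : V → V → Prop) (u v : V) : Prop := u ≠ v ∧ ¬ E u v ∧ ¬ E v u

/-- The missing edges form a matching: every vertex has at most one non-neighbor. -/
def MissingMatching (E : V → V → Prop) : Prop :=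
  ∀ u v w : V, NonAdj E u v → NonAdj E u w → v = w

/-- A special arc `x ↠ y`: an arc such that `x` is not in the second
out-neighborhood of `y`. -/
def SpecialArc (E : V → V → Prop) (x y : V) : Prop :=
  E x y ∧ ¬ ∃ u, E y u ∧ E u x

/-- Number of forward arcs of an ordering (list) of the vertices. -/
noncomputable def fwd (E : V → V → Prop) (L : List V) : ℕ :=
  Set.ncard {p : ℕ × ℕ | p.1 < p.2 ∧ ∃ (h1 : p.1 < L.length) (h2 : p.2 < L.length),
    E (L.get ⟨p.1, h1⟩) (L.get ⟨p.2, h2⟩)}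

/-- A median order: an enumeration of all vertices maximizing the number of
forward arcs. -/
def MedianOrder (E : V → V → Prop) (L : List V) : Prop :=
  L.Nodup ∧ (∀ v : V, v ∈ L) ∧
    ∀ M : List V, M.Nodup → (∀ v : V, v ∈ M) → fwd E M ≤ fwd E L

/-- A module: any two vertices inside have the same in- and out-neighborhoods
outside. -/
def IsModule (E : V → V → Prop) (I : Set V) : Prop :=
  ∀ u ∈ I, ∀ v ∈ I, ∀ w, w ∉ I → (E u w ↔ E v w) ∧ (E w u ↔ E w v)

/-- 2-degeneracy of the underlying undirected graph. -/
def TwoDegenerate (E : V → V → Prop) : Prop :=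
  ∀ S : Set V, S.Nonempty → ∃ v ∈ S, Set.ncard {u | u ∈ S ∧ u ≠ v ∧ (E u v ∨ E v u)} ≤ 2

/-- The relation `(a,b) R (c,d)`: the 4-cycle `a → c ↠ b → d ↠ a`. -/
def Rrel (E : V → V → Prop) (a b c d : V) : Prop :=
  E a c ∧ SpecialArc E c b ∧ E b d ∧ SpecialArc E d a


open scoped Classical

section HTAux
variable [Fintype V] {E : V → V → Prop}

lemma fwd_formula (E : V → V → Prop) (L : List V) (hnd : L.Nodup) (hc : ∀ v : V, v ∈ L) :
    fwd E L = (Finset.univ.filter fun p : V × V =>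
        E p.1 p.2 ∧ L.idxOf p.1 < L.idxOf p.2).card := by
  classical
  set F := (Finset.univ.filter fun p : V × V =>
        E p.1 p.2 ∧ L.idxOf p.1 < L.idxOf p.2) with hF
  have himg : {p : ℕ × ℕ | p.1 < p.2 ∧ ∃ (h1 : p.1 < L.length) (h2 : p.2 < L.length),
      E (L.get ⟨p.1, h1⟩) (L.get ⟨p.2, h2⟩)} =
      (fun q : V × V => (L.idxOf q.1, L.idxOf q.2)) '' ↑F := by
    ext p
    constructor
    · rintro ⟨hlt, h1, h2, hE⟩
      refine ⟨(L.get ⟨p.1, h1⟩, L.get ⟨p.2, h2⟩), ?_, ?_⟩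
      · simp only [hF, Finset.coe_filter, Set.mem_setOf_eq, Finset.mem_univ, true_and]
        refine ⟨hE, ?_⟩
        simp only [List.get_eq_getElem]
        rw [List.Nodup.idxOf_getElem hnd _ _, List.Nodup.idxOf_getElem hnd _ _]
        exact hlt
      · simp only [List.get_eq_getElem]
        rw [List.Nodup.idxOf_getElem hnd _ _, List.Nodup.idxOf_getElem hnd _ _]
    · rintro ⟨⟨u, w⟩, hq, rfl⟩
      simp only [hF, Finset.mem_coe, Finset.mem_filter, Finset.mem_univ, true_and] at hq
      obtain ⟨hE, hlt⟩ := hq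
      have h1 : L.idxOf u < L.length := List.idxOf_lt_length_iff.2 (hc u)
      have h2 : L.idxOf w < L.length := List.idxOf_lt_length_iff.2 (hc w)
      refine ⟨hlt, h1, h2, ?_⟩
      simp only [List.get_eq_getElem]
      rw [List.getElem_idxOf h1, List.getElem_idxOf h2]
      exact hE
  rw [fwd, himg, Set.ncard_image_of_injOn, Set.ncard_coe_finset]
  rintro ⟨a1, a2⟩ _ ⟨b1, b2⟩ _ hab
  simp only [Prod.mk.injEq] at hab
  have e1 : a1 = b1 := (List.idxOf_inj (hc a1)).1 hab.1
  have e2 : a2 = b2 := (List.idxOf_inj (hc a2)).1 hab.2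
  simp [e1, e2]


lemma fwd_swap (hE : Oriented E) (X Y : List V) (a b : V)
    (hnd : (X ++ a :: b :: Y).Nodup) (hc : ∀ v : V, v ∈ X ++ a :: b :: Y) :
    fwd E (X ++ a :: b :: Y) + (if E b a then 1 else 0)
      = fwd E (X ++ b :: a :: Y) + (if E a b then 1 else 0) := by
  classical
  have hperm : (X ++ a :: b :: Y).Perm (X ++ b :: a :: Y) :=
    List.Perm.append_left X (List.Perm.swap b a Y)
  have hnd2 : (X ++ b :: a :: Y).Nodup := hperm.nodup_iff.1 hnd
  have hc2 : ∀ v : V, v ∈ X ++ b :: a :: Y := fun v => hperm.mem_iff.1 (hc v)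
  have hnd' := hnd
  rw [List.nodup_append] at hnd'
  obtain ⟨hndX, hndR, hdisj⟩ := hnd'
  have hab : a ≠ b := by
    intro h; subst h; simp [List.nodup_cons] at hndR
  have haY : a ∉ Y := by simp [List.nodup_cons] at hndR; exact hndR.1.2
  have hbY : b ∉ Y := by simp [List.nodup_cons] at hndR; exact hndR.2.1
  have hXa : a ∉ X := fun h => hdisj _ h _ (by simp) rfl
  have hXb : b ∉ X := fun h => hdisj _ h _ (by simp) rfl
  have ia1 : (X ++ a :: b :: Y).idxOf a = X.length := by
    rw [List.idxOf_append_of_notMem hXa, List.idxOf_cons_self]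
    omega
  have ia2 : (X ++ b :: a :: Y).idxOf a = X.length + 1 := by
    rw [List.idxOf_append_of_notMem hXa, List.idxOf_cons_ne _ hab.symm,
      List.idxOf_cons_self]
  have ib1 : (X ++ a :: b :: Y).idxOf b = X.length + 1 := by
    rw [List.idxOf_append_of_notMem hXb, List.idxOf_cons_ne _ hab,
      List.idxOf_cons_self]
  have ib2 : (X ++ b :: a :: Y).idxOf b = X.length := by
    rw [List.idxOf_append_of_notMem hXb, List.idxOf_cons_self]
    omega
  have cls : ∀ u : V,
      (u ∈ X ∧ (X ++ a :: b :: Y).idxOf u = X.idxOf u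
        ∧ (X ++ b :: a :: Y).idxOf u = X.idxOf u ∧ X.idxOf u < X.length)
    ∨ (u = a ∧ (X ++ a :: b :: Y).idxOf u = X.length
        ∧ (X ++ b :: a :: Y).idxOf u = X.length + 1)
    ∨ (u = b ∧ (X ++ a :: b :: Y).idxOf u = X.length + 1
        ∧ (X ++ b :: a :: Y).idxOf u = X.length)
    ∨ (u ∈ Y ∧ (X ++ a :: b :: Y).idxOf u = X.length + 2 + Y.idxOf u
        ∧ (X ++ b :: a :: Y).idxOf u = X.length + 2 + Y.idxOf u) := by
    intro u
    rcases List.mem_append.1 (hc u) with hu | hu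
    · exact Or.inl ⟨hu, List.idxOf_append_of_mem hu, List.idxOf_append_of_mem hu,
        List.idxOf_lt_length_iff.2 hu⟩
    · rcases List.mem_cons.1 hu with h | hu'
      · exact Or.inr (Or.inl ⟨h, h ▸ ia1, h ▸ ia2⟩)
      · rcases List.mem_cons.1 hu' with h | huY
        · exact Or.inr (Or.inr (Or.inl ⟨h, h ▸ ib1, h ▸ ib2⟩))
        · have hua : a ≠ u := by rintro rfl; exact haY huY
          have hub : b ≠ u := by rintro rfl; exact hbY huY
          have huX : u ∉ X := fun h => hdisj _ h _ (by simp [huY]) rfl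
          refine Or.inr (Or.inr (Or.inr ⟨huY, ?_, ?_⟩))
          · rw [List.idxOf_append_of_notMem huX, List.idxOf_cons_ne _ hua,
              List.idxOf_cons_ne _ hub]
            omega
          · rw [List.idxOf_append_of_notMem huX, List.idxOf_cons_ne _ hub,
              List.idxOf_cons_ne _ hua]
            omega
  have key : ∀ u w : V, E u w → ¬(u = a ∧ w = b) → ¬(u = b ∧ w = a) →
      ((X ++ a :: b :: Y).idxOf u < (X ++ a :: b :: Y).idxOf w ↔
       (X ++ b :: a :: Y).idxOf u < (X ++ b :: a :: Y).idxOf w) := by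
    intro u w hEuw hn1 hn2
    have huw : u ≠ w := by rintro rfl; exact hE u u hEuw hEuw
    rcases cls u with ⟨hu, e1, e2, eb⟩ | ⟨hua, e1, e2⟩ | ⟨hub, e1, e2⟩ | ⟨hu, e1, e2⟩ <;>
      rcases cls w with ⟨hw, f1, f2, fb⟩ | ⟨hwa, f1, f2⟩ | ⟨hwb, f1, f2⟩ | ⟨hw, f1, f2⟩ <;>
      try (rw [e1, e2, f1, f2]; try omega)
    · exact absurd ⟨hua, hwb⟩ hn1
    · exact absurd ⟨hub, hwa⟩ hn2
  rw [fwd_formula E _ hnd hc, fwd_formula E _ hnd2 hc2]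
  set F1 := (Finset.univ.filter fun p : V × V =>
      E p.1 p.2 ∧ (X ++ a :: b :: Y).idxOf p.1 < (X ++ a :: b :: Y).idxOf p.2) with hF1
  set F2 := (Finset.univ.filter fun p : V × V =>
      E p.1 p.2 ∧ (X ++ b :: a :: Y).idxOf p.1 < (X ++ b :: a :: Y).idxOf p.2) with hF2
  have hmain : F1.erase (a, b) = F2.erase (b, a) := by
    ext ⟨u, w⟩
    simp only [hF1, hF2, Finset.mem_erase, Finset.mem_filter, Finset.mem_univ, true_and,
      Ne, Prod.mk.injEq, not_and]
    constructor
    · rintro ⟨hne1, hEuw, hlt⟩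
      have hne2 : ¬(u = b ∧ w = a) := by
        rintro ⟨rfl, rfl⟩
        rw [ib1, ia1] at hlt; omega
      refine ⟨fun h1 h2 => hne2 ⟨h1, h2⟩, hEuw, (key u w hEuw (fun h => hne1 h.1 h.2) hne2).1 hlt⟩
    · rintro ⟨hne2, hEuw, hlt⟩
      have hne1 : ¬(u = a ∧ w = b) := by
        rintro ⟨rfl, rfl⟩
        rw [ia2, ib2] at hlt; omega
      refine ⟨fun h1 h2 => hne1 ⟨h1, h2⟩, hEuw,
        (key u w hEuw hne1 (fun h => hne2 h.1 h.2)).2 hlt⟩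
  have hmem1 : ((a, b) ∈ F1) ↔ E a b := by
    simp only [hF1, Finset.mem_filter, Finset.mem_univ, true_and, ia1, ib1]
    simp
  have hmem2 : ((b, a) ∈ F2) ↔ E b a := by
    simp only [hF2, Finset.mem_filter, Finset.mem_univ, true_and, ia2, ib2]
    simp
  have c1 : F1.card = (F1.erase (a, b)).card + (if E a b then 1 else 0) := by
    by_cases h : E a b
    · rw [if_pos h]
      exact (Finset.card_erase_add_one (hmem1.2 h)).symm
    · rw [if_neg h, Finset.erase_eq_of_notMem (fun hm => h (hmem1.1 hm))]
      omega
  have c2 : F2.card = (F2.erase (b, a)).card + (if E b a then 1 else 0) := by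
    by_cases h : E b a
    · rw [if_pos h]
      exact (Finset.card_erase_add_one (hmem2.2 h)).symm
    · rw [if_neg h, Finset.erase_eq_of_notMem (fun hm => h (hmem2.1 hm))]
      omega
  rw [c1, c2, hmain]
  ring


lemma fwd_move (hE : Oriented E) :
    ∀ (Bm A C : List V) (c : V), (A ++ Bm ++ c :: C).Nodup →
      (∀ v : V, v ∈ A ++ Bm ++ c :: C) →
    fwd E (A ++ c :: Bm ++ C) + Bm.countP (fun u => decide (E u c))
      = fwd E (A ++ Bm ++ c :: C) + Bm.countP (fun u => decide (E c u)) := by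
  intro Bm
  induction Bm using List.reverseRecOn with
  | nil => intro A C c hnd hc; simp
  | append_singleton Bm' b IH =>
    intro A C c hnd hc
    simp only [List.append_assoc, List.cons_append, List.nil_append, List.singleton_append] at hnd hc ⊢
    have hsw := fwd_swap hE (A ++ Bm') C b c
      (by simpa [List.append_assoc, List.cons_append, List.nil_append] using hnd)
      (by intro u; simpa [List.append_assoc, List.cons_append, List.nil_append] using hc u)
    simp only [List.append_assoc, List.cons_append, List.nil_append] at hsw
    have hperm : (A ++ (Bm' ++ b :: c :: C)).Perm (A ++ (Bm' ++ c :: b :: C)) :=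
      List.Perm.append_left A (List.Perm.append_left Bm' (List.Perm.swap c b C))
    have hnd3 : (A ++ (Bm' ++ c :: b :: C)).Nodup := hperm.nodup_iff.1 hnd
    have hc3 : ∀ u : V, u ∈ A ++ (Bm' ++ c :: b :: C) := fun u => hperm.mem_iff.1 (hc u)
    have hIH := IH A (b :: C) c (by simpa [List.append_assoc, List.cons_append, List.nil_append] using hnd3)
      (by intro u; simpa [List.append_assoc, List.cons_append, List.nil_append] using hc3 u)
    simp only [List.append_assoc, List.cons_append, List.nil_append] at hIH
    have hb1 : (Bm' ++ [b]).countP (fun u => decide (E u c))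
        = Bm'.countP (fun u => decide (E u c)) + (if E b c then 1 else 0) := by
      by_cases h : E b c <;> simp [List.countP_append, h]
    have hb2 : (Bm' ++ [b]).countP (fun u => decide (E c u))
        = Bm'.countP (fun u => decide (E c u)) + (if E c b then 1 else 0) := by
      by_cases h : E c b <;> simp [List.countP_append, h]
    rw [hb1, hb2]
    omega

lemma median_constraint {L : List V} (hL : MedianOrder E L) (hE : Oriented E)
    (A Bm C : List V) (c : V) (hdec : L = A ++ Bm ++ c :: C) :
    Bm.countP (fun u => decide (E c u)) ≤ Bm.countP (fun u => decide (E u c)) := by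
  obtain ⟨hnd, hcomp, hmax⟩ := hL
  subst hdec
  have h := fwd_move hE Bm A C c hnd hcomp
  have hperm : (A ++ c :: Bm ++ C).Perm (A ++ Bm ++ c :: C) := by
    have e1 : A ++ c :: Bm ++ C = A ++ (c :: (Bm ++ C)) := by simp [List.append_assoc]
    have e2 : A ++ Bm ++ c :: C = A ++ (Bm ++ c :: C) := by simp [List.append_assoc]
    rw [e1, e2]
    exact List.Perm.append_left A List.perm_middle.symm
  have h2 := hmax (A ++ c :: Bm ++ C) (hperm.nodup_iff.2 hnd)
    (fun u => hperm.mem_iff.2 (hcomp u))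
  omega

end HTAux

section Midseg
variable {V : Type*}

/-- the segment of `L` from position `j` (inclusive) to `q` (exclusive) -/
def midseg (L : List V) (j q : ℕ) : List V := (L.drop j).take (q - j)

lemma midseg_self (L : List V) (j : ℕ) : midseg L j j = [] := by simp [midseg]

lemma take_append_midseg (L : List V) {j q : ℕ} (h : j ≤ q) :
    L.take j ++ midseg L j q = L.take q := by
  rw [midseg, ← List.take_add]
  congr 1
  omega

lemma midseg_append (L : List V) {j q b : ℕ} (h1 : j ≤ q) (h2 : q ≤ b) :
    midseg L j b = midseg L j q ++ midseg L q b := by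
  rw [midseg, midseg, midseg, show b - j = (q - j) + (b - q) from by omega,
    List.take_add, List.drop_drop, show j + (q - j) = q from by omega]

lemma midseg_cons (L : List V) {q b : ℕ} (hq : q < L.length) (hb : q < b) :
    midseg L q b = L[q] :: midseg L (q + 1) b := by
  rw [midseg, midseg, List.drop_eq_getElem_cons hq,
    show b - q = (b - (q + 1)) + 1 from by omega, List.take_succ_cons]

lemma midseg_zero (L : List V) (q : ℕ) : midseg L 0 q = L.take q := by simp [midseg]

lemma midseg_full (L : List V) : midseg L 0 L.length = L := by simp [midseg]

lemma mem_midseg {L : List V} {j q : ℕ} {u : V} (h : u ∈ midseg L j q) :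
    ∃ r, j ≤ r ∧ r < q ∧ ∃ (hr : r < L.length), L[r] = u := by
  rw [midseg] at h
  obtain ⟨m, hm, hget⟩ := List.mem_iff_getElem.1 h
  have hlen : m < q - j ∧ m < L.length - j := by
    simp only [List.length_take, List.length_drop, lt_min_iff] at hm
    omega
  refine ⟨j + m, by omega, by omega, by omega, ?_⟩
  rw [List.getElem_take, List.getElem_drop] at hget
  exact hget

lemma countP_eq_ncard [Fintype V] (L : List V) (hnd : L.Nodup) (hc : ∀ v : V, v ∈ L)
    (S : Set V) : L.countP (fun u => decide (u ∈ S)) = S.ncard := by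
  classical
  rw [List.countP_eq_length_filter]
  have hfn : (L.filter (fun u => decide (u ∈ S))).Nodup := hnd.filter _
  rw [← List.toFinset_card_of_nodup hfn, Set.ncard_eq_toFinset_card']
  congr 1
  ext u
  simp [List.mem_filter, hc u]

end Midseg

theorem stmt18 [Fintype V] (E : V → V → Prop) (hT : Tournament E)
    (L : List V) (hL : MedianOrder E L) (hne : L ≠ [])
    (hcard : Set.ncard (outN E (L.getLast hne)) =
      Set.ncard (secondN E (L.getLast hne)))
    {i : ℕ} (hi : i < L.length)
    (hmem : L.get ⟨i, hi⟩ ∈ inN E (L.getLast hne) \ secondN E (L.getLast hne))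
    (hfirst : ∀ l (hl : l < L.length),
      L.get ⟨l, hl⟩ ∈ inN E (L.getLast hne) \ secondN E (L.getLast hne) → i ≤ l) :
    MedianOrder E (L.get ⟨i, hi⟩ :: (L.take i ++ L.drop (i + 1))) := by
  classical
  obtain ⟨hnd, hcomp, hmax⟩ := hL
  have ho : Oriented E := hT.1
  set v := L.getLast hne with hv
  have hn0 : 0 < L.length := List.length_pos_iff.2 hne
  have hnv : L.length - 1 < L.length := by omega
  have hgl : L[L.length - 1]'hnv = v := by rw [hv, List.getLast_eq_getElem]
  simp only [List.get_eq_getElem] at hmem hfirst ⊢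
  have hcv : E (L[i]'hi) v := hmem.1
  have hvne : ∀ u : V, E u v → u ≠ v := by
    intro u h heq; rw [heq] at h; exact ho v v h h
  have hFdom : ∀ f, E f v → f ∉ secondN E v → ∀ a, E v a → E f a := by
    intro f hfv hfB a hva
    have hfa : f ≠ a := by rintro rfl; exact ho v f hva hfv
    rcases hT.2 f a hfa with h | h
    · exact h
    · exact absurd ⟨ho f v hfv, hvne f hfv, a, hva, h⟩ hfB
  have hclassB : ∀ u : V, u ≠ v → ¬ E v u → ¬ (E u v ∧ u ∉ secondN E v) →
      u ∈ secondN E v := by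
    intro u h1 h2 h3
    rcases hT.2 u v h1 with h | h
    · by_cases hb : u ∈ secondN E v
      · exact hb
      · exact absurd ⟨h, hb⟩ h3
    · exact absurd h h2
  have hner : ∀ r (hr : r < L.length), r < L.length - 1 → L[r]'hr ≠ v := by
    intro r hr hlt heq
    have h2 : L[r]'hr = L[L.length - 1]'hnv := heq.trans hgl.symm
    have h3 := (List.Nodup.getElem_inj_iff hnd).1 h2
    omega
  have constraint : ∀ q (hq : q < L.length) (j : ℕ), j ≤ q →
      (midseg L j q).countP (fun u => decide (E (L[q]'hq) u)) ≤
      (midseg L j q).countP (fun u => decide (E u (L[q]'hq))) := by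
    intro q hq j hj
    refine median_constraint ⟨hnd, hcomp, hmax⟩ ho (L.take j) (midseg L j q)
      (L.drop (q + 1)) (L[q]'hq) ?_
    conv_lhs => rw [← List.take_append_drop q L, List.drop_eq_getElem_cons hq]
    rw [← take_append_midseg L hj]
  have string : ∀ m j, j ≤ L.length - 1 → L.length - 1 - j ≤ m →
      (midseg L j (L.length - 1)).countP (fun u => decide (u ∈ outN E v)) ≤
      (midseg L j (L.length - 1)).countP (fun u => decide (u ∈ secondN E v)) := by
    intro m
    induction m with
    | zero =>
      intro j hj hm
      have he : midseg L j (L.length - 1) = [] := by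
        rw [midseg, show L.length - 1 - j = 0 from by omega, List.take_zero]
      simp [he]
    | succ m IH =>
      intro j hj hm
      by_cases hFex : ∃ r, (j ≤ r ∧ r < L.length - 1) ∧ ∃ (hr : r < L.length),
          E (L[r]'hr) v ∧ L[r]'hr ∉ secondN E v
      · have hspec := Nat.find_spec hFex
        set q := Nat.find hFex with hqdef
        obtain ⟨⟨hjq, hqlt⟩, hqn, hfv, hfB⟩ := hspec
        have hmin : ∀ r, r < q → ¬ ((j ≤ r ∧ r < L.length - 1) ∧ ∃ (hr : r < L.length),
            E (L[r]'hr) v ∧ L[r]'hr ∉ secondN E v) := fun r hr => Nat.find_min hFex hr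
        have hcon := constraint q hqn j hjq
        have s1 : (midseg L j q).countP (fun u => decide (u ∈ outN E v)) ≤
            (midseg L j q).countP (fun u => decide (E (L[q]'hqn) u)) := by
          refine List.countP_mono_left ?_
          intro x hx hxg
          simp only [decide_eq_true_eq] at hxg ⊢
          exact hFdom _ hfv hfB x hxg
        have s3 : (midseg L j q).countP (fun u => decide (E u (L[q]'hqn))) ≤
            (midseg L j q).countP (fun u => decide (u ∈ secondN E v)) := by
          refine List.countP_mono_left ?_
          intro x hx hxf
          simp only [decide_eq_true_eq] at hxf ⊢
          obtain ⟨r, hjr, hrq, hr, hrx⟩ := mem_midseg hx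
          have hxv : x ≠ v := by rw [← hrx]; exact hner r hr (by omega)
          have hxG : ¬ E v x := fun h => ho x _ hxf (hFdom _ hfv hfB x h)
          have hxF : ¬ (E x v ∧ x ∉ secondN E v) := by
            intro hF
            exact hmin r hrq ⟨⟨hjr, by omega⟩, hr, by rw [hrx]; exact hF⟩
          exact hclassB x hxv hxG hxF
        have hsplit : midseg L j (L.length - 1) =
            midseg L j q ++ (L[q]'hqn) :: midseg L (q + 1) (L.length - 1) := by
          rw [midseg_append L hjq (show q ≤ L.length - 1 from by omega),
            midseg_cons L hqn (by omega)]
        have hIH := IH (q + 1) (by omega) (by omega)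
        have hfG : ¬ ((L[q]'hqn) ∈ outN E v) := fun h => ho _ v hfv h
        have e1 : (if (decide ((L[q]'hqn) ∈ outN E v)) = true then 1 else 0) = 0 := by
          simp [hfG]
        have e2 : (if (decide ((L[q]'hqn) ∈ secondN E v)) = true then 1 else 0) = 0 := by
          simp [hfB]
        simp only [hsplit, List.countP_append, List.countP_cons]
        omega
      · have hcon := constraint (L.length - 1) hnv j hj
        simp only [hgl] at hcon
        have s1 : (midseg L j (L.length - 1)).countP (fun u => decide (u ∈ outN E v)) ≤
            (midseg L j (L.length - 1)).countP (fun u => decide (E v u)) := by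
          refine List.countP_mono_left ?_
          intro x hx hxg
          simp only [decide_eq_true_eq] at hxg ⊢
          exact hxg
        have s3 : (midseg L j (L.length - 1)).countP (fun u => decide (E u v)) ≤
            (midseg L j (L.length - 1)).countP (fun u => decide (u ∈ secondN E v)) := by
          refine List.countP_mono_left ?_
          intro x hx hxf
          simp only [decide_eq_true_eq] at hxf ⊢
          obtain ⟨r, hjr, hrq, hr, hrx⟩ := mem_midseg hx
          by_contra hxB
          exact hFex ⟨r, ⟨hjr, by omega⟩, hr, by rw [hrx]; exact ⟨hxf, hxB⟩⟩
        exact le_trans s1 (le_trans hcon s3)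
  have hcnv : L[i]'hi ≠ v := hvne _ hcv
  have hilt : i < L.length - 1 := by
    by_contra h
    have hieq : i = L.length - 1 := by omega
    subst hieq
    exact hcnv hgl
  have htotG := countP_eq_ncard L hnd hcomp (outN E v)
  have htotB := countP_eq_ncard L hnd hcomp (secondN E v)
  have hLeq : L = L.take i ++ (L[i]'hi) ::
      (midseg L (i + 1) (L.length - 1) ++ [L[L.length - 1]'hnv]) := by
    conv_lhs => rw [← midseg_full L]
    rw [midseg_append L (Nat.zero_le i) (le_of_lt hi), midseg_cons L hi (by omega),
      midseg_append L (show i + 1 ≤ L.length - 1 from by omega)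
        (show L.length - 1 ≤ L.length from by omega),
      midseg_cons L hnv (by omega), show L.length - 1 + 1 = L.length from by omega,
      midseg_self, midseg_zero]
  have eG := congrArg (List.countP (fun u => decide (u ∈ outN E v))) hLeq
  have eB := congrArg (List.countP (fun u => decide (u ∈ secondN E v))) hLeq
  simp only [List.countP_append, List.countP_cons, List.countP_nil] at eG eB
  rw [hgl] at eG eB
  have hcG : ¬ ((L[i]'hi) ∈ outN E v) := fun h => ho _ _ hcv h
  have hcB2 : ¬ ((L[i]'hi) ∈ secondN E v) := hmem.2
  have hvG : ¬ (v ∈ outN E v) := fun h => ho v v h h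
  have hvB : ¬ (v ∈ secondN E v) := fun h => h.2.1 rfl
  have z1 : (if (decide ((L[i]'hi) ∈ outN E v)) = true then 1 else 0) = 0 := by simp [hcG]
  have z2 : (if (decide ((L[i]'hi) ∈ secondN E v)) = true then 1 else 0) = 0 := by
    simp [hcB2]
  have z3 : (if (decide (v ∈ outN E v)) = true then 1 else 0) = 0 := by simp [hvG]
  have z4 : (if (decide (v ∈ secondN E v)) = true then 1 else 0) = 0 := by simp [hvB]
  have hsuf := string (L.length - 1) (i + 1) (by omega) (by omega)
  have hpre : (L.take i).countP (fun u => decide (u ∈ secondN E v)) ≤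
      (L.take i).countP (fun u => decide (u ∈ outN E v)) := by omega
  have hdec0 : L = L.take i ++ (L[i]'hi) :: L.drop (i + 1) := by
    conv_lhs => rw [← List.take_append_drop i L, List.drop_eq_getElem_cons hi]
  have hndM0 : ([] ++ L.take i ++ (L[i]'hi) :: L.drop (i + 1)).Nodup := by
    simp only [List.nil_append]
    rw [← hdec0]
    exact hnd
  have hcM0 : ∀ u : V, u ∈ [] ++ L.take i ++ (L[i]'hi) :: L.drop (i + 1) := by
    intro u
    simp only [List.nil_append]
    rw [← hdec0]
    exact hcomp u
  have hmove := fwd_move ho (L.take i) [] (L.drop (i + 1)) (L[i]'hi) hndM0 hcM0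
  simp only [List.nil_append, List.cons_append] at hmove
  rw [← hdec0] at hmove
  have hin : (L.take i).countP (fun u => decide (E u (L[i]'hi))) ≤
      (L.take i).countP (fun u => decide (u ∈ secondN E v)) := by
    refine List.countP_mono_left ?_
    intro x hx hxf
    simp only [decide_eq_true_eq] at hxf ⊢
    have hx' : x ∈ midseg L 0 i := by rw [midseg_zero]; exact hx
    obtain ⟨r, hjr, hrq, hr, hrx⟩ := mem_midseg hx'
    have hxv : x ≠ v := by rw [← hrx]; exact hner r hr (by omega)
    have hxG : ¬ E v x := fun h => ho x _ hxf (hFdom _ hcv hmem.2 x h)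
    have hxF : ¬ (E x v ∧ x ∉ secondN E v) := by
      intro hF
      have := hfirst r (by omega) ⟨by rw [hrx]; exact hF.1, by rw [hrx]; exact hF.2⟩
      omega
    exact hclassB x hxv hxG hxF
  have hout : (L.take i).countP (fun u => decide (u ∈ outN E v)) ≤
      (L.take i).countP (fun u => decide (E (L[i]'hi) u)) := by
    refine List.countP_mono_left ?_
    intro x hx hxg
    simp only [decide_eq_true_eq] at hxg ⊢
    exact hFdom _ hcv hmem.2 x hxg
  have hfwd : fwd E L ≤ fwd E ((L[i]'hi) :: (L.take i ++ L.drop (i + 1))) := by omega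
  have hpermM : ((L[i]'hi) :: (L.take i ++ L.drop (i + 1))).Perm L := by
    conv_rhs => rw [hdec0]
    exact List.perm_middle.symm
  exact ⟨hpermM.nodup_iff.2 hnd, fun u => hpermM.mem_iff.2 (hcomp u),
    fun M' h1 h2 => le_trans (hmax M' h1 h2) hfwd⟩
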